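/- Let S ⊂ ℝⁿ be compact, let f : ℝⁿ → ℝ and c : ℝⁿ → ℝᵐ be twice continuously differentiable, write g(x) = ∇f(x) and A(x) = ∇c(x) (the n×m matrix whose columns are ∇c_i(x)), and suppose there is λ > 0 with σ_min(A(x)) ≥ λ for all x ∈ S. Fix σ ≥ 0 and define y_σ(x) = (A(x)ᵀA(x))⁻¹(A(x)ᵀg(x) − σc(x)) and φ_{σ,ρ}(x) = f(x) − c(x)ᵀy_σ(x) + (ρ/2)‖c(x)‖². Then there exists ρ*(σ) > 0 such that for all ρ > ρ*(σ): if x̄ ∈ S and ∇φ_{σ,ρ}(x̄) = 0, then c(x̄) = 0 and g(x̄) = A(x̄) y_σ(x̄), i.e., x̄ is a first-order KKT point of minimizing f subject to c(x) = 0. -/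

import Mathlib

open Matrix

section aux
variable {E : Type*} [NormedAddCommGroup E] [NormedSpace ℝ E] {U : Set E}

lemma auxProd {ι : Type*} (s : Finset ι) (f : ι → E → ℝ)
    (h : ∀ i ∈ s, ContDiffOn ℝ 1 (f i) U) :
    ContDiffOn ℝ 1 (fun x => ∏ i ∈ s, f i x) U := by
  classical
  induction s using Finset.induction_on with
  | empty => simpa using contDiffOn_const
  | insert a s hni ih =>
    simp only [Finset.prod_insert hni]
    exact (h a (Finset.mem_insert_self a s)).mul
      (ih fun i hi => h i (Finset.mem_insert_of_mem hi))

lemma auxDet {q : ℕ} (M : E → Matrix (Fin q) (Fin q) ℝ)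
    (h : ∀ i j, ContDiffOn ℝ 1 (fun x => M x i j) U) :
    ContDiffOn ℝ 1 (fun x => (M x).det) U := by
  simp_rw [Matrix.det_apply']
  apply ContDiffOn.sum
  intro σ _
  exact contDiffOn_const.mul (auxProd Finset.univ _ (fun i _ => h (σ i) i))

lemma auxAdj {q : ℕ} (M : E → Matrix (Fin q) (Fin q) ℝ)
    (h : ∀ i j, ContDiffOn ℝ 1 (fun x => M x i j) U) (i j : Fin q) :
    ContDiffOn ℝ 1 (fun x => (M x).adjugate i j) U := by
  simp_rw [Matrix.adjugate_apply]
  apply auxDet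
  intro k l
  by_cases hk : k = j
  · simp only [Matrix.updateRow_apply, hk, if_pos rfl]
    exact contDiffOn_const
  · simp only [Matrix.updateRow_apply, if_neg hk]
    exact h k l

lemma auxInv {q : ℕ} (M : E → Matrix (Fin q) (Fin q) ℝ)
    (h : ∀ i j, ContDiffOn ℝ 1 (fun x => M x i j) U)
    (hdet : ∀ x ∈ U, (M x).det ≠ 0) (i j : Fin q) :
    ContDiffOn ℝ 1 (fun x => (M x)⁻¹ i j) U := by
  simp_rw [Matrix.inv_def, Ring.inverse_eq_inv, Matrix.smul_apply, smul_eq_mul]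
  exact ((auxDet M h).inv hdet).mul (auxAdj M h i j)

end aux

set_option maxHeartbeats 2000000 in
/-- Theorem 3.2, threshold penalty value for the quadratic penalty.
On a compact set `S` where the smallest singular value of the constraint Jacobian `A(x)` is
bounded below by `λ > 0`, for any fixed `σ ≥ 0` there exists `ρ*(σ) > 0` such that for all
`ρ > ρ*(σ)`, every stationary point `x̄ ∈ S` of
`φ_{σ,ρ}(x) = f(x) − c(x)ᵀ y_σ(x) + (ρ/2)‖c(x)‖²` is a first-order KKT point of
`min f(x) s.t. c(x) = 0`, i.e. `c(x̄) = 0` and `∇f(x̄) = A(x̄) y_σ(x̄)`. -/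
theorem quadratic_penalty_threshold
    {n m : ℕ}
    (S : Set (EuclideanSpace ℝ (Fin n))) (hS : IsCompact S)
    (f : EuclideanSpace ℝ (Fin n) → ℝ) (hf : ContDiff ℝ 2 f)
    (c : EuclideanSpace ℝ (Fin n) → EuclideanSpace ℝ (Fin m)) (hc : ContDiff ℝ 2 c)
    (A : EuclideanSpace ℝ (Fin n) → Matrix (Fin n) (Fin m) ℝ)
    (hA : ∀ x, ∀ i : Fin n, ∀ j : Fin m, A x i j = gradient (fun z => c z j) x i)
    (lam : ℝ) (hlam : 0 < lam)
    (hsmin : ∀ x ∈ S, ∀ v : Fin m → ℝ,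
      lam * Real.sqrt (v ⬝ᵥ v) ≤ Real.sqrt ((A x).mulVec v ⬝ᵥ (A x).mulVec v))
    (σ : ℝ) (hσ : 0 ≤ σ)
    (yσ : EuclideanSpace ℝ (Fin n) → Fin m → ℝ)
    (hyσ : ∀ x, yσ x =
      ((A x)ᵀ * A x)⁻¹.mulVec ((A x)ᵀ.mulVec (fun i => gradient f x i) - σ • fun j => c x j))
    (φ : ℝ → EuclideanSpace ℝ (Fin n) → ℝ)
    (hφ : ∀ ρ x, φ ρ x = f x - (fun j => c x j) ⬝ᵥ yσ x + ρ / 2 * ‖c x‖ ^ 2) :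
    ∃ ρstar : ℝ, 0 < ρstar ∧
      ∀ ρ : ℝ, ρstar < ρ →
        ∀ xbar ∈ S, gradient (φ ρ) xbar = 0 →
          c xbar = 0 ∧ gradient f xbar = (A xbar).mulVec (yσ xbar) := by
  classical
  -- basic smoothness
  have hcj : ∀ j : Fin m, ContDiff ℝ 2 (fun z : EuclideanSpace ℝ (Fin n) => c z j) :=
    fun j => by exact (EuclideanSpace.proj j).contDiff.comp hc
  have hgrad : ∀ (F : EuclideanSpace ℝ (Fin n) → ℝ), ContDiff ℝ 2 F →
      ContDiff ℝ 1 (fun x => gradient F x) := by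
    intro F hF
    have h1 : ContDiff ℝ 1 (fderiv ℝ F) := hF.fderiv_right (by norm_num)
    exact ((InnerProductSpace.toDual ℝ (EuclideanSpace ℝ (Fin n))).symm.contDiff).comp h1
  have hgradi : ∀ (F : EuclideanSpace ℝ (Fin n) → ℝ), ContDiff ℝ 2 F → ∀ i : Fin n,
      ContDiff ℝ 1 (fun x => gradient F x i) := by
    intro F hF i
    exact (EuclideanSpace.proj i).contDiff.comp (hgrad F hF)
  have hAe : ∀ (i : Fin n) (j : Fin m), ContDiff ℝ 1 (fun x => A x i j) := by
    intro i j
    simp_rw [hA]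
    exact hgradi _ (hcj j) i
  -- the Gram matrix
  set M : EuclideanSpace ℝ (Fin n) → Matrix (Fin m) (Fin m) ℝ :=
    fun x => (A x)ᵀ * A x with hM
  have hMe : ∀ (j k : Fin m), ContDiff ℝ 1 (fun x => M x j k) := by
    intro j k
    simp_rw [hM, Matrix.mul_apply, Matrix.transpose_apply]
    exact ContDiff.sum fun i _ => (hAe i j).mul (hAe i k)
  have hdetC : Continuous (fun x => (M x).det) := by
    have := auxDet (U := (Set.univ : Set (EuclideanSpace ℝ (Fin n)))) M
      (fun i j => (hMe i j).contDiffOn)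
    simpa [continuousOn_univ] using this.continuousOn
  set U : Set (EuclideanSpace ℝ (Fin n)) := {x | (M x).det ≠ 0} with hU
  have hUopen : IsOpen U := isOpen_compl_singleton.preimage hdetC
  have hSU : S ⊆ U := by
    intro x hx
    simp only [hU, Set.mem_setOf_eq]
    intro hdet0
    obtain ⟨v, hv0, hveq⟩ := (Matrix.exists_mulVec_eq_zero_iff).2 hdet0
    have key : (A x).mulVec v ⬝ᵥ (A x).mulVec v = 0 := by
      have h1 : v ⬝ᵥ (M x).mulVec v = 0 := by rw [hveq]; simp [dotProduct]
      rw [hM] at h1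
      rw [← Matrix.mulVec_mulVec, Matrix.dotProduct_mulVec, Matrix.vecMul_transpose] at h1
      exact h1
    have h2 := hsmin x hx v
    rw [key, Real.sqrt_zero] at h2
    have hvv : 0 < v ⬝ᵥ v := by
      obtain ⟨i, hi⟩ := Function.ne_iff.1 hv0
      have : v i * v i ≤ v ⬝ᵥ v := by
        apply Finset.single_le_sum (f := fun i => v i * v i) (fun i _ => mul_self_nonneg _)
          (Finset.mem_univ i)
      nlinarith [mul_self_pos.2 hi]
    nlinarith [Real.sqrt_pos.2 hvv]

  -- explicit formula for yσ
  have hyform : ∀ x (j : Fin m), yσ x j =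
      ∑ k, (M x)⁻¹ j k * ((∑ i, A x i k * gradient f x i) - σ * c x k) := by
    intro x j
    rw [hyσ x]
    simp [hM, Matrix.mulVec, dotProduct, Matrix.transpose_apply, Pi.sub_apply,
      Pi.smul_apply, smul_eq_mul]
  have hdetU : ∀ x ∈ U, (M x).det ≠ 0 := fun x hx => hx
  have hyC : ∀ j : Fin m, ContDiffOn ℝ 1 (fun x => yσ x j) U := by
    intro j
    have : (fun x => yσ x j) = fun x =>
        ∑ k, (M x)⁻¹ j k * ((∑ i, A x i k * gradient f x i) - σ * c x k) :=
      funext fun x => hyform x j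
    rw [this]
    apply ContDiffOn.sum
    intro k _
    apply (auxInv M (fun a b => (hMe a b).contDiffOn) hdetU j k).mul
    apply ContDiffOn.sub
    · exact (ContDiff.sum fun i _ => (hAe i k).mul (hgradi f hf i)).contDiffOn
    · exact (contDiff_const.mul ((hcj k).of_le (by norm_num))).contDiffOn

  -- continuity of derivatives, compactness bounds
  have hDyCont : ContinuousOn (fun x => ∑ j, ‖fderiv ℝ (fun z => yσ z j) x‖) U := by
    apply continuousOn_finset_sum
    intro j _
    exact ((hyC j).continuousOn_fderiv_of_isOpen hUopen le_rfl).norm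
  have hDcCont : Continuous (fun x => ∑ j, ‖fderiv ℝ (fun z : EuclideanSpace ℝ (Fin n) => c z j) x‖) := by
    apply continuous_finset_sum
    intro j _
    exact (((hcj j).fderiv_right (m := 1) (by norm_num)).continuous).norm
  obtain ⟨G, hG⟩ : ∃ G, ∀ x ∈ S, (∑ j, ‖fderiv ℝ (fun z => yσ z j) x‖) ≤ G := by
    obtain ⟨G, hG⟩ := hS.bddAbove_image (hDyCont.mono hSU)
    exact ⟨G, fun x hx => hG ⟨x, hx, rfl⟩⟩
  obtain ⟨K, hK⟩ : ∃ K, ∀ x ∈ S,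
      (∑ j, ‖fderiv ℝ (fun z : EuclideanSpace ℝ (Fin n) => c z j) x‖) ≤ K := by
    obtain ⟨K, hK⟩ := hS.bddAbove_image hDcCont.continuousOn
    exact ⟨K, fun x hx => hK ⟨x, hx, rfl⟩⟩
  -- the threshold
  refine ⟨max 1 (G * K / lam ^ 2), lt_max_of_lt_left one_pos, ?_⟩
  intro ρ hρ xbar hxS h0
  have hρ1 : (1 : ℝ) < ρ := lt_of_le_of_lt (le_max_left _ _) hρ
  have hρpos : 0 < ρ := lt_trans one_pos hρ1
  have hρGK : G * K < ρ * lam ^ 2 := by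
    have : G * K / lam ^ 2 < ρ := lt_of_le_of_lt (le_max_right _ _) hρ
    have hl2 : 0 < lam ^ 2 := by positivity
    calc G * K = G * K / lam ^ 2 * lam ^ 2 := by field_simp
    _ < ρ * lam ^ 2 := by exact mul_lt_mul_of_pos_right this hl2
  -- derivatives at xbar
  set Df := fderiv ℝ f xbar with hDf
  set Dc : Fin m → (EuclideanSpace ℝ (Fin n) →L[ℝ] ℝ) :=
    fun j => fderiv ℝ (fun z => c z j) xbar with hDcdef
  set Dy : Fin m → (EuclideanSpace ℝ (Fin n) →L[ℝ] ℝ) :=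
    fun j => fderiv ℝ (fun z => yσ z j) xbar with hDydef
  have hdf : HasFDerivAt f Df xbar :=
    (hf.differentiable (by norm_num)).differentiableAt.hasFDerivAt
  have hdc : ∀ j, HasFDerivAt (fun z => c z j) (Dc j) xbar :=
    fun j => ((hcj j).differentiable (by norm_num)).differentiableAt.hasFDerivAt
  have hdy : ∀ j, HasFDerivAt (fun z => yσ z j) (Dy j) xbar :=
    fun j => (((hyC j).contDiffAt (hUopen.mem_nhds (hSU hxS))).differentiableAt
      one_ne_zero).hasFDerivAt
  set cv : Fin m → ℝ := fun j => c xbar j with hcv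
  set yv : Fin m → ℝ := yσ xbar with hyv
  -- rewrite φ ρ
  have hφ2 : φ ρ = fun x => f x - (∑ j, c x j * yσ x j) + ρ / 2 * (∑ j, c x j * c x j) := by
    funext x
    rw [hφ]
    have hnorm : ‖c x‖ ^ 2 = ∑ j, c x j * c x j := by
      rw [EuclideanSpace.real_norm_sq_eq]
      simp only [pow_two]
    rw [hnorm]
    simp [dotProduct]
  set L : EuclideanSpace ℝ (Fin n) →L[ℝ] ℝ :=
    Df - (∑ j, (cv j • Dy j + yv j • Dc j)) + (ρ / 2) • (∑ j, (cv j • Dc j + cv j • Dc j))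
    with hLdef
  have hL : HasFDerivAt (φ ρ) L xbar := by
    rw [hφ2]
    exact ((hdf.sub (HasFDerivAt.fun_sum fun j _ => (hdc j).mul (hdy j))).add
      ((HasFDerivAt.fun_sum fun j _ => (hdc j).mul (hdc j)).const_mul (ρ / 2)))
  have hL0 : L = 0 := by
    have h1 : fderiv ℝ (φ ρ) xbar = L := hL.fderiv
    have h2 := congrArg (InnerProductSpace.toDual ℝ (EuclideanSpace ℝ (Fin n))) h0
    simp only [gradient] at h2
    rw [LinearIsometryEquiv.apply_symm_apply, map_zero] at h2
    rw [← h1, h2]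
  have hstar : ∀ v, Df v - (∑ j, (cv j * Dy j v + yv j * Dc j v))
      + ρ * (∑ j, cv j * Dc j v) = 0 := by
    intro v
    have h1 := DFunLike.congr_fun hL0 v
    rw [hLdef] at h1
    simp only [ContinuousLinearMap.add_apply, ContinuousLinearMap.sub_apply,
      ContinuousLinearMap.smul_apply, ContinuousLinearMap.coe_sum', Finset.sum_apply,
      ContinuousLinearMap.zero_apply, smul_eq_mul] at h1
    have h2 : ∑ j, (cv j * Dc j v + cv j * Dc j v) = 2 * ∑ j, cv j * Dc j v := by
      rw [Finset.sum_add_distrib]; ring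
    rw [h2] at h1
    linarith

  -- inner product in coordinates
  have hinner : ∀ (u v : EuclideanSpace ℝ (Fin n)), (inner ℝ u v : ℝ) = ∑ i, u i * v i := by
    intro u v
    simp [PiLp.inner_apply, RCLike.inner_apply, conj_trivial, mul_comm]
  have hDcv : ∀ j v, Dc j v = ∑ i, gradient (fun z => c z j) xbar i * v i := by
    intro j v
    rw [← hinner]
    rw [show gradient (fun z => c z j) xbar
      = (InnerProductSpace.toDual ℝ (EuclideanSpace ℝ (Fin n))).symm (Dc j) from rfl]
    exact (InnerProductSpace.toDual_symm_apply).symm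
  have hDfv : ∀ v, Df v = ∑ i, gradient f xbar i * v i := by
    intro v
    rw [← hinner]
    rw [show gradient f xbar
      = (InnerProductSpace.toDual ℝ (EuclideanSpace ℝ (Fin n))).symm Df from rfl]
    exact (InnerProductSpace.toDual_symm_apply).symm
  -- the vector w = A cv
  set w : Fin n → ℝ := (A xbar).mulVec cv with hw
  set wE : EuclideanSpace ℝ (Fin n) := (EuclideanSpace.equiv (Fin n) ℝ).symm w with hwE
  have hwEi : ∀ i, wE i = w i := fun i => rfl
  have hwi : ∀ i, w i = ∑ j, A xbar i j * cv j := fun i => rfl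
  have hDcw : ∀ j, Dc j wE = ∑ i, A xbar i j * w i := by
    intro j
    rw [hDcv]
    exact Finset.sum_congr rfl fun i _ => by rw [← hA xbar i j, hwEi]
  have hP3 : ∑ j, cv j * Dc j wE = w ⬝ᵥ w := by
    calc ∑ j, cv j * Dc j wE = ∑ j, ∑ i, cv j * (A xbar i j * w i) := by
          simp_rw [hDcw, Finset.mul_sum]
    _ = ∑ i, ∑ j, cv j * (A xbar i j * w i) := Finset.sum_comm
    _ = ∑ i, w i * w i := by
          apply Finset.sum_congr rfl
          intro i _
          rw [hwi i, Finset.sum_mul]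
          exact Finset.sum_congr rfl fun j _ => by ring
    _ = w ⬝ᵥ w := rfl
  have hP5 : ∑ j, yv j * Dc j wE = w ⬝ᵥ ((A xbar).mulVec yv) := by
    calc ∑ j, yv j * Dc j wE = ∑ j, ∑ i, yv j * (A xbar i j * w i) := by
          simp_rw [hDcw, Finset.mul_sum]
    _ = ∑ i, ∑ j, yv j * (A xbar i j * w i) := Finset.sum_comm
    _ = ∑ i, w i * (∑ j, A xbar i j * yv j) := by
          apply Finset.sum_congr rfl
          intro i _
          rw [Finset.mul_sum]
          exact Finset.sum_congr rfl fun j _ => by ring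
    _ = w ⬝ᵥ ((A xbar).mulVec yv) := rfl
  -- the normal equations
  have hdet : IsUnit ((A xbar)ᵀ * A xbar).det := isUnit_iff_ne_zero.2 (hSU hxS)
  have hP4 : (((A xbar)ᵀ * A xbar)).mulVec yv
      = (A xbar)ᵀ.mulVec (fun i => gradient f xbar i) - σ • cv := by
    rw [hyv, hyσ xbar, Matrix.mulVec_mulVec, Matrix.mul_nonsing_inv _ hdet, Matrix.one_mulVec]
  have hE1 : ∑ j, yv j * Dc j wE = Df wE - σ * (cv ⬝ᵥ cv) := by
    have h4 := congrArg (fun z => cv ⬝ᵥ z) hP4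
    simp only at h4
    have hLHS : cv ⬝ᵥ (((A xbar)ᵀ * A xbar)).mulVec yv = w ⬝ᵥ ((A xbar).mulVec yv) := by
      rw [← Matrix.mulVec_mulVec, Matrix.dotProduct_mulVec, Matrix.vecMul_transpose]
    have hRHS : cv ⬝ᵥ ((A xbar)ᵀ.mulVec (fun i => gradient f xbar i) - σ • cv)
        = Df wE - σ * (cv ⬝ᵥ cv) := by
      rw [dotProduct_sub, dotProduct_smul, smul_eq_mul]
      congr 1
      rw [Matrix.dotProduct_mulVec, Matrix.vecMul_transpose, hDfv]
      exact Finset.sum_congr rfl fun i _ => by rw [hwEi]; ring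
    rw [hP5, ← hLHS, h4, hRHS]
  have hKEY : σ * (cv ⬝ᵥ cv) + ρ * (w ⬝ᵥ w) = ∑ j, cv j * Dy j wE := by
    have h1 := hstar wE
    rw [hP3, Finset.sum_add_distrib] at h1
    rw [hE1] at h1
    linarith

  -- norms and bounds
  have hcc0 : 0 ≤ cv ⬝ᵥ cv := Finset.sum_nonneg fun i _ => mul_self_nonneg _
  have hww0 : 0 ≤ w ⬝ᵥ w := Finset.sum_nonneg fun i _ => mul_self_nonneg _
  set sc := Real.sqrt (cv ⬝ᵥ cv) with hsc
  set sw := Real.sqrt (w ⬝ᵥ w) with hsw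
  have hsc0 : 0 ≤ sc := Real.sqrt_nonneg _
  have hsw0 : 0 ≤ sw := Real.sqrt_nonneg _
  have hsc2 : sc ^ 2 = cv ⬝ᵥ cv := Real.sq_sqrt hcc0
  have hsw2 : sw ^ 2 = w ⬝ᵥ w := Real.sq_sqrt hww0
  have hwEnorm : ‖wE‖ = sw := by
    rw [EuclideanSpace.norm_eq]
    congr 1
    exact Finset.sum_congr rfl fun i _ => by
      rw [hwEi, Real.norm_eq_abs, sq_abs, pow_two]
  have hcvj : ∀ j, |cv j| ≤ sc := by
    intro j
    rw [← Real.sqrt_sq_eq_abs]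
    apply Real.sqrt_le_sqrt
    have h1 := Finset.single_le_sum (f := fun j => cv j * cv j)
      (fun j _ => mul_self_nonneg _) (Finset.mem_univ j)
    calc cv j ^ 2 = cv j * cv j := pow_two _
    _ ≤ cv ⬝ᵥ cv := h1
  -- generic bound for sums of the shape ∑ cv j * T j wE
  have hgenbound : ∀ (T : Fin m → (EuclideanSpace ℝ (Fin n) →L[ℝ] ℝ)) (B : ℝ),
      (∑ j, ‖T j‖) ≤ B → (∑ j, cv j * T j wE) ≤ sc * B * sw := by
    intro T B hB
    calc ∑ j, cv j * T j wE ≤ ∑ j, |cv j * T j wE| :=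
          Finset.sum_le_sum fun j _ => le_abs_self _
    _ ≤ ∑ j, sc * (‖T j‖ * sw) := by
          apply Finset.sum_le_sum
          intro j _
          rw [abs_mul]
          have h1 : |T j wE| ≤ ‖T j‖ * sw := by
            have h2 := (T j).le_opNorm wE
            rw [hwEnorm] at h2
            exact (Real.norm_eq_abs _ ▸ h2)
          have h3 : (0:ℝ) ≤ ‖T j‖ * sw := mul_nonneg (norm_nonneg _) hsw0
          exact mul_le_mul (hcvj j) h1 (abs_nonneg _) hsc0
    _ = sc * (∑ j, ‖T j‖) * sw := by
          rw [← Finset.mul_sum, ← Finset.sum_mul, mul_assoc]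
    _ ≤ sc * B * sw := by
          have : (∑ j, ‖T j‖) * (sc * sw) ≤ B * (sc * sw) :=
            mul_le_mul_of_nonneg_right hB (mul_nonneg hsc0 hsw0)
          nlinarith
  have hGnn : (0:ℝ) ≤ G :=
    le_trans (Finset.sum_nonneg fun j _ => norm_nonneg _) (hG xbar hxS)
  have hKnn : (0:ℝ) ≤ K :=
    le_trans (Finset.sum_nonneg fun j _ => norm_nonneg _) (hK xbar hxS)
  have hS1 : ∑ j, cv j * Dy j wE ≤ sc * G * sw := hgenbound Dy G (hG xbar hxS)
  have hS2 : w ⬝ᵥ w ≤ sc * K * sw := hP3 ▸ hgenbound Dc K (hK xbar hxS)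
  have hlamb : lam * sc ≤ sw := hsmin xbar hxS cv
  -- sw ≤ K * sc
  have hswK : sw ≤ K * sc := by
    rcases eq_or_lt_of_le hsw0 with h | h
    · rw [← h]; positivity
    · nlinarith
  -- conclude c xbar = 0
  have hsczero : sc = 0 := by
    by_contra hne
    have hscpos : 0 < sc := lt_of_le_of_ne hsc0 (Ne.symm hne)
    have h1 : σ * (cv ⬝ᵥ cv) + ρ * (w ⬝ᵥ w) ≤ sc * G * (K * sc) := by
      calc σ * (cv ⬝ᵥ cv) + ρ * (w ⬝ᵥ w) = ∑ j, cv j * Dy j wE := hKEY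
      _ ≤ sc * G * sw := hS1
      _ ≤ sc * G * (K * sc) := mul_le_mul_of_nonneg_left hswK (mul_nonneg hsc0 hGnn)
    have h2 : lam ^ 2 * sc ^ 2 ≤ sw ^ 2 := by
      have := mul_self_le_mul_self (mul_nonneg hlam.le hsc0) hlamb
      nlinarith
    have h3 : ρ * (lam ^ 2 * sc ^ 2) ≤ ρ * sw ^ 2 := mul_le_mul_of_nonneg_left h2 hρpos.le
    have h4 : ρ * sw ^ 2 ≤ sc * G * (K * sc) := by
      rw [hsw2]
      have h5 := mul_nonneg hσ hcc0
      linarith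
    have h6 : G * K * sc ^ 2 < ρ * lam ^ 2 * sc ^ 2 :=
      mul_lt_mul_of_pos_right hρGK (pow_pos hscpos 2)
    have h7 : sc * G * (K * sc) = G * K * sc ^ 2 := by ring
    have h8 : ρ * lam ^ 2 * sc ^ 2 = ρ * (lam ^ 2 * sc ^ 2) := by ring
    linarith
  have hccz : cv ⬝ᵥ cv = 0 := by
    have := hsc2
    rw [hsczero] at this
    simpa using this.symm
  have hcvz : ∀ j, cv j = 0 := by
    intro j
    have h1 := (Finset.sum_eq_zero_iff_of_nonneg
      (fun j _ => mul_self_nonneg (cv j))).1 hccz j (Finset.mem_univ j)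
    exact mul_self_eq_zero.1 h1
  have hcxbar : c xbar = 0 := by ext j; exact hcvz j
  refine ⟨hcxbar, ?_⟩
  -- now the gradient identity
  have hstar2 : ∀ v, Df v = ∑ j, yv j * Dc j v := by
    intro v
    have h1 := hstar v
    simp only [hcvz, zero_mul, zero_add, Finset.sum_const_zero, mul_zero, add_zero] at h1
    linarith [h1]
  set AyE : EuclideanSpace ℝ (Fin n) :=
    (EuclideanSpace.equiv (Fin n) ℝ).symm ((A xbar).mulVec yv) with hAyE
  have hAyEi : ∀ i, AyE i = ∑ j, A xbar i j * yv j := fun i => rfl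
  have hzero : ∀ v : EuclideanSpace ℝ (Fin n), (inner ℝ (gradient f xbar - AyE) v : ℝ) = 0 := by
    intro v
    rw [inner_sub_left, hinner, hinner]
    have h1 : ∑ i, AyE i * v i = ∑ j, yv j * Dc j v := by
      calc ∑ i, AyE i * v i = ∑ i, ∑ j, yv j * (A xbar i j * v i) := by
            apply Finset.sum_congr rfl
            intro i _
            rw [hAyEi, Finset.sum_mul]
            exact Finset.sum_congr rfl fun j _ => by ring
      _ = ∑ j, ∑ i, yv j * (A xbar i j * v i) := Finset.sum_comm
      _ = ∑ j, yv j * Dc j v := by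
            apply Finset.sum_congr rfl
            intro j _
            rw [hDcv, Finset.mul_sum]
            exact Finset.sum_congr rfl fun i _ => by rw [← hA xbar i j]
    rw [h1, ← hDfv, hstar2 v, sub_self]
  have hfinal : gradient f xbar - AyE = 0 := by
    rw [← inner_self_eq_zero (𝕜 := ℝ)]
    exact hzero _
  exact congrArg WithLp.ofLp (sub_eq_zero.1 hfinal)
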